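/- arXiv:2305.10965 — 5 statements merged into one kernel-verified Lean document; each statement's English description precedes it below -/
import Mathlib

section
/- In the conjugate gradient algorithm applied to A x = b with symmetric positive definite A, the search directions are pairwise A-orthogonal: p_iᵀ A p_j = 0 for all i ≠ j with i, j ≤ K. -/
open Matrix

/-- In CG, the search directions are pairwise A-orthogonal. -/
theorem cg_directions_A_orthogonal
    (n : ℕ) (A : Matrix (Fin n) (Fin n) ℝ) (hA : A.PosDef)
    (b x : Fin n → ℝ) (hx : A *ᵥ x = b)
    (xs rs ps : ℕ → Fin n → ℝ) (K : ℕ)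
    (hr0 : rs 0 = b - A *ᵥ xs 0) (hp0 : ps 0 = rs 0)
    (hxs : ∀ k : ℕ, xs (k + 1) =
      xs k + ((rs k ⬝ᵥ rs k) / (ps k ⬝ᵥ (A *ᵥ ps k))) • ps k)
    (hrs : ∀ k : ℕ, rs (k + 1) =
      rs k - ((rs k ⬝ᵥ rs k) / (ps k ⬝ᵥ (A *ᵥ ps k))) • (A *ᵥ ps k))
    (hps : ∀ k : ℕ, ps (k + 1) =
      rs (k + 1) + ((rs (k + 1) ⬝ᵥ rs (k + 1)) / (rs k ⬝ᵥ rs k)) • ps k)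
    (hbd : ∀ j ≤ K, rs j ≠ 0 ∧ ps j ≠ 0) :
    ∀ i ≤ K, ∀ j ≤ K, i ≠ j → ps i ⬝ᵥ (A *ᵥ ps j) = 0 := by
  -- symmetry of the bilinear form
  have hAt : Aᵀ = A := by have := hA.1.eq; rwa [conjTranspose_eq_transpose_of_trivial] at this
  have hsym : ∀ u v : Fin n → ℝ, u ⬝ᵥ (A *ᵥ v) = v ⬝ᵥ (A *ᵥ u) := fun u v => by
    rw [dotProduct_mulVec, ← mulVec_transpose, hAt, dotProduct_comm]
  -- positivity facts
  have hpAp : ∀ j ≤ K, ps j ⬝ᵥ (A *ᵥ ps j) ≠ 0 := fun j hj =>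
    ne_of_gt (hA.dotProduct_mulVec_pos (hbd j hj).2)
  have hrr0 : ∀ j ≤ K, rs j ⬝ᵥ rs j ≠ 0 := fun j hj => by
    simpa using (hbd j hj).1
  -- the key invariant, proved by induction
  have key : ∀ m ≤ K,
      (∀ i < m, rs m ⬝ᵥ rs i = 0) ∧
      (∀ i < m, rs m ⬝ᵥ ps i = 0) ∧
      (∀ i < m, ps m ⬝ᵥ (A *ᵥ ps i) = 0) ∧
      (rs m ⬝ᵥ ps m = rs m ⬝ᵥ rs m) := by
    intro m
    induction m with
    | zero =>
      intro _
      refine ⟨fun i hi => absurd hi (Nat.not_lt_zero i),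
        fun i hi => absurd hi (Nat.not_lt_zero i),
        fun i hi => absurd hi (Nat.not_lt_zero i), by rw [hp0]⟩
    | succ m ih =>
      intro hm1
      have hmK : m ≤ K := le_trans (Nat.le_succ m) hm1
      obtain ⟨hrr, hrp, hpp, hrpeq⟩ := ih hmK
      set γ : ℝ := (rs m ⬝ᵥ rs m) / (ps m ⬝ᵥ (A *ᵥ ps m)) with hγ
      -- r_{m+1} ⊥ p_i for i ≤ m
      have hrp' : ∀ i < m + 1, rs (m + 1) ⬝ᵥ ps i = 0 := by
        intro i hi
        have hexp : rs (m + 1) ⬝ᵥ ps i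
            = rs m ⬝ᵥ ps i - γ * (ps m ⬝ᵥ (A *ᵥ ps i)) := by
          rw [hrs m, sub_dotProduct, smul_dotProduct, smul_eq_mul, dotProduct_comm (A *ᵥ ps m),
            hsym (ps i) (ps m)]
        rcases Nat.lt_succ_iff_lt_or_eq.mp hi with h | h
        · rw [hexp, hrp i h, hsym (ps m) (ps i), hsym (ps i) (ps m), hpp i h, mul_zero, sub_zero]
        · rw [h] at hexp
          rw [h, hexp, hrpeq, hγ, div_mul_cancel₀ _ (hpAp m hmK), sub_self]
      -- r_{m+1} ⊥ r_i for i ≤ m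
      have hrr' : ∀ i < m + 1, rs (m + 1) ⬝ᵥ rs i = 0 := by
        intro i hi
        match i with
        | 0 => rw [← hp0]; exact hrp' 0 hi
        | (j + 1) =>
          have hj : j < m + 1 := lt_trans (Nat.lt_succ_self j) hi
          have : rs (j + 1) = ps (j + 1)
              - ((rs (j + 1) ⬝ᵥ rs (j + 1)) / (rs j ⬝ᵥ rs j)) • ps j := by
            rw [hps j]; abel
          rw [this, dotProduct_sub, dotProduct_smul, hrp' (j + 1) hi, hrp' j hj,
            smul_eq_mul, mul_zero, sub_self]
      -- p_{m+1} ⊥_A p_i for i ≤ m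
      have hpp' : ∀ i < m + 1, ps (m + 1) ⬝ᵥ (A *ᵥ ps i) = 0 := by
        intro i hi
        set β : ℝ := (rs (m + 1) ⬝ᵥ rs (m + 1)) / (rs m ⬝ᵥ rs m) with hβ
        have hexp : ps (m + 1) ⬝ᵥ (A *ᵥ ps i)
            = rs (m + 1) ⬝ᵥ (A *ᵥ ps i) + β * (ps m ⬝ᵥ (A *ᵥ ps i)) := by
          rw [hps m, add_dotProduct, smul_dotProduct, smul_eq_mul]
        rcases Nat.lt_succ_iff_lt_or_eq.mp hi with h | h
        · -- use γ_i • (A p_i) = r_i - r_{i+1}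
          have hiK : i ≤ K := le_trans (le_of_lt h) hmK
          set γi : ℝ := (rs i ⬝ᵥ rs i) / (ps i ⬝ᵥ (A *ᵥ ps i)) with hγi
          have hγine : γi ≠ 0 := div_ne_zero (hrr0 i hiK) (hpAp i hiK)
          have hApi : γi • (A *ᵥ ps i) = rs i - rs (i + 1) := by
            rw [hrs i]; abel
          have h1 : γi * (rs (m + 1) ⬝ᵥ (A *ᵥ ps i)) = 0 := by
            have := congrArg (fun v => rs (m + 1) ⬝ᵥ v) hApi
            simp only [dotProduct_smul, smul_eq_mul, dotProduct_sub] at this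
            rw [this, hrr' i (lt_trans h (Nat.lt_succ_self m)),
              hrr' (i + 1) (Nat.succ_lt_succ h), sub_self]
          have h2 : rs (m + 1) ⬝ᵥ (A *ᵥ ps i) = 0 :=
            (mul_eq_zero.mp h1).resolve_left hγine
          rw [hexp, h2, hpp i h, mul_zero, add_zero]
        · rw [h] at hexp ⊢
          have hγne : γ ≠ 0 := div_ne_zero (hrr0 m hmK) (hpAp m hmK)
          have hApm : γ • (A *ᵥ ps m) = rs m - rs (m + 1) := by
            rw [hrs m]; abel
          have h1 : γ * (rs (m + 1) ⬝ᵥ (A *ᵥ ps m))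
              = - (rs (m + 1) ⬝ᵥ rs (m + 1)) := by
            have := congrArg (fun v => rs (m + 1) ⬝ᵥ v) hApm
            simp only [dotProduct_smul, smul_eq_mul, dotProduct_sub] at this
            rw [this, hrr' m (Nat.lt_succ_self m), zero_sub]
          have h2 : rs (m + 1) ⬝ᵥ (A *ᵥ ps m)
              = - (rs (m + 1) ⬝ᵥ rs (m + 1)) / γ := by
            field_simp
            linarith [h1]
          rw [hexp, h2, hβ, hγ]
          field_simp
          ring
      -- the scalar identity at m+1
      have hrpeq' : rs (m + 1) ⬝ᵥ ps (m + 1) = rs (m + 1) ⬝ᵥ rs (m + 1) := by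
        rw [hps m, dotProduct_add, dotProduct_smul, hrp' m (Nat.lt_succ_self m),
          smul_eq_mul, mul_zero, add_zero]
      exact ⟨hrr', hrp', hpp', hrpeq'⟩
  -- conclude
  intro i hi j hj hij
  rcases lt_or_gt_of_ne hij with h | h
  · rw [hsym]
    exact (key j hj).2.2.1 i h
  · exact (key i hi).2.2.1 j h
end

section
/- In the conjugate gradient algorithm applied to A x = b with symmetric positive definite A, the residual vectors are pairwise orthogonal: r_iᵀ r_j = 0 for all i ≠ j with i, j ≤ K. -/
open Matrix

/-- In CG, the residual vectors are pairwise orthogonal. -/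
theorem cg_residuals_orthogonal
    (n : ℕ) (A : Matrix (Fin n) (Fin n) ℝ) (hA : A.PosDef)
    (b x : Fin n → ℝ) (hx : A *ᵥ x = b)
    (xs rs ps : ℕ → Fin n → ℝ) (K : ℕ)
    (hr0 : rs 0 = b - A *ᵥ xs 0) (hp0 : ps 0 = rs 0)
    (hxs : ∀ k : ℕ, xs (k + 1) =
      xs k + ((rs k ⬝ᵥ rs k) / (ps k ⬝ᵥ (A *ᵥ ps k))) • ps k)
    (hrs : ∀ k : ℕ, rs (k + 1) =
      rs k - ((rs k ⬝ᵥ rs k) / (ps k ⬝ᵥ (A *ᵥ ps k))) • (A *ᵥ ps k))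
    (hps : ∀ k : ℕ, ps (k + 1) =
      rs (k + 1) + ((rs (k + 1) ⬝ᵥ rs (k + 1)) / (rs k ⬝ᵥ rs k)) • ps k)
    (hbd : ∀ j ≤ K, rs j ≠ 0 ∧ ps j ≠ 0) :
    ∀ i ≤ K, ∀ j ≤ K, i ≠ j → rs i ⬝ᵥ rs j = 0 := by
  -- symmetry of the A-bilinear form
  have hsym : ∀ u v : Fin n → ℝ, u ⬝ᵥ (A *ᵥ v) = v ⬝ᵥ (A *ᵥ u) := by
    intro u v
    have h : Aᵀ = A := by simpa using hA.isHermitian.eq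
    rw [dotProduct_mulVec, dotProduct_comm, ← mulVec_transpose, h]
  have hpApos : ∀ m ≤ K, 0 < ps m ⬝ᵥ (A *ᵥ ps m) := fun m hm =>
    hA.re_dotProduct_pos (hbd m hm).2
  have hrr : ∀ m ≤ K, rs m ⬝ᵥ rs m ≠ 0 := by
    intro m hm
    simpa [dotProduct_self_eq_zero] using (hbd m hm).1
  -- main simultaneous induction
  have key : ∀ k, k ≤ K → ∀ i j, i < j → j ≤ k →
      rs i ⬝ᵥ rs j = 0 ∧ ps i ⬝ᵥ (A *ᵥ ps j) = 0 := by
    intro k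
    induction k with
    | zero => intro _ i j hij hj; omega
    | succ k ih =>
      intro hk1 i j hij hjk1
      have hkK : k ≤ K := le_trans (Nat.le_succ k) hk1
      have IH := ih hkK
      rcases Nat.lt_or_ge j (k + 1) with hj | hj
      · exact IH i j hij (by omega)
      have hjeq : j = k + 1 := by omega
      subst hjeq
      -- residuals against A *ᵥ ps k
      have rApm : ∀ m, m < k → rs m ⬝ᵥ (A *ᵥ ps k) = 0 := by
        intro m hm
        cases m with
        | zero =>
          rw [← hp0]
          exact (IH 0 k hm le_rfl).2
        | succ m' =>
          have h1 : rs (m' + 1) = ps (m' + 1) -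
              ((rs (m' + 1) ⬝ᵥ rs (m' + 1)) / (rs m' ⬝ᵥ rs m')) • ps m' := by
            rw [hps m']; abel
          rw [h1, sub_dotProduct, smul_dotProduct,
            (IH m' k (by omega) le_rfl).2, (IH (m' + 1) k (by omega) le_rfl).2]
          simp
      have rApk : rs k ⬝ᵥ (A *ᵥ ps k) = ps k ⬝ᵥ (A *ᵥ ps k) := by
        cases k with
        | zero => rw [hp0]
        | succ k' =>
          have h1 : rs (k' + 1) = ps (k' + 1) -
              ((rs (k' + 1) ⬝ᵥ rs (k' + 1)) / (rs k' ⬝ᵥ rs k')) • ps k' := by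
            rw [hps k']; abel
          rw [h1, sub_dotProduct, smul_dotProduct,
            (IH k' (k' + 1) (by omega) le_rfl).2]
          simp
      -- orthogonality of earlier residuals with rs (k+1)
      have rorth : ∀ m, m ≤ k → rs m ⬝ᵥ rs (k + 1) = 0 := by
        intro m hm
        rw [hrs k, dotProduct_sub, dotProduct_smul, smul_eq_mul]
        rcases Nat.lt_or_ge m k with hmk | hmk
        · rw [(IH m k hmk le_rfl).1, rApm m hmk]; ring
        · have hmeq : m = k := by omega
          rw [hmeq, rApk]
          have hp := (hpApos k hkK).ne'
          rw [div_mul_cancel₀ _ hp, sub_self]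
      refine ⟨rorth i (by omega), ?_⟩
      -- conjugacy: ps i ⬝ᵥ (A *ᵥ ps (k+1)) = 0
      rw [hsym, hps k, add_dotProduct, smul_dotProduct, smul_eq_mul]
      rcases Nat.lt_or_ge i k with hik | hik
      · -- i < k
        have h2 : ps k ⬝ᵥ (A *ᵥ ps i) = 0 := by
          rw [hsym]; exact (IH i k hik le_rfl).2
        have hiK : i ≤ K := by omega
        have hγ : (rs i ⬝ᵥ rs i) / (ps i ⬝ᵥ (A *ᵥ ps i)) ≠ 0 :=
          div_ne_zero (hrr i hiK) (hpApos i hiK).ne'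
        have hsmul : ((rs i ⬝ᵥ rs i) / (ps i ⬝ᵥ (A *ᵥ ps i))) • (A *ᵥ ps i)
            = rs i - rs (i + 1) := by
          rw [hrs i]; abel
        have h3 : ((rs i ⬝ᵥ rs i) / (ps i ⬝ᵥ (A *ᵥ ps i))) *
            (rs (k + 1) ⬝ᵥ (A *ᵥ ps i)) = 0 := by
          rw [← smul_eq_mul, ← dotProduct_smul, hsmul, dotProduct_sub,
            dotProduct_comm, rorth i (by omega), dotProduct_comm,
            rorth (i + 1) (by omega)]
          ring
        have h4 : rs (k + 1) ⬝ᵥ (A *ᵥ ps i) = 0 := by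
          rcases mul_eq_zero.mp h3 with h | h
          · exact absurd h hγ
          · exact h
        rw [h4, h2]; ring
      · -- i = k
        have hieq : i = k := by omega
        rw [hieq]
        have hγ : (rs k ⬝ᵥ rs k) / (ps k ⬝ᵥ (A *ᵥ ps k)) ≠ 0 :=
          div_ne_zero (hrr k hkK) (hpApos k hkK).ne'
        have hsmul : ((rs k ⬝ᵥ rs k) / (ps k ⬝ᵥ (A *ᵥ ps k))) • (A *ᵥ ps k)
            = rs k - rs (k + 1) := by
          rw [hrs k]; abel
        have h3 : ((rs k ⬝ᵥ rs k) / (ps k ⬝ᵥ (A *ᵥ ps k))) *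
            (rs (k + 1) ⬝ᵥ (A *ᵥ ps k)) = - (rs (k + 1) ⬝ᵥ rs (k + 1)) := by
          rw [← smul_eq_mul, ← dotProduct_smul, hsmul, dotProduct_sub,
            dotProduct_comm, rorth k le_rfl]
          ring
        have hrrk := hrr k hkK
        have hpAp := (hpApos k hkK).ne'
        have h4 : rs (k + 1) ⬝ᵥ (A *ᵥ ps k) =
            - (rs (k + 1) ⬝ᵥ rs (k + 1)) * (ps k ⬝ᵥ (A *ᵥ ps k)) / (rs k ⬝ᵥ rs k) := by
          field_simp at h3 ⊢
          linarith [h3]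
        rw [h4]
        field_simp
        ring
  intro i hi j hj hij
  rcases Nat.lt_or_ge i j with h | h
  · exact (key K le_rfl i j h hj).1
  · have h' : j < i := by omega
    rw [dotProduct_comm]
    exact (key K le_rfl j i h' hi).1
end

section
/- In the conjugate gradient algorithm applied to A x = b with symmetric positive definite A, each residual is orthogonal to all previous search directions and aligned with the current one: r_kᵀ p_j = 0 for all j < k ≤ K, and p_kᵀ r_k = r_kᵀ r_k for all k ≤ K. -/
open Matrix

/-- In CG, each residual is orthogonal to all previous search directions and
aligned with the current one. -/
theorem cg_residual_orthogonal_to_directions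
    (n : ℕ) (A : Matrix (Fin n) (Fin n) ℝ) (hA : A.PosDef)
    (b x : Fin n → ℝ) (hx : A *ᵥ x = b)
    (xs rs ps : ℕ → Fin n → ℝ) (K : ℕ)
    (hr0 : rs 0 = b - A *ᵥ xs 0) (hp0 : ps 0 = rs 0)
    (hxs : ∀ k : ℕ, xs (k + 1) =
      xs k + ((rs k ⬝ᵥ rs k) / (ps k ⬝ᵥ (A *ᵥ ps k))) • ps k)
    (hrs : ∀ k : ℕ, rs (k + 1) =
      rs k - ((rs k ⬝ᵥ rs k) / (ps k ⬝ᵥ (A *ᵥ ps k))) • (A *ᵥ ps k))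
    (hps : ∀ k : ℕ, ps (k + 1) =
      rs (k + 1) + ((rs (k + 1) ⬝ᵥ rs (k + 1)) / (rs k ⬝ᵥ rs k)) • ps k)
    (hbd : ∀ j ≤ K, rs j ≠ 0 ∧ ps j ≠ 0) :
    (∀ j k : ℕ, j < k → k ≤ K → rs k ⬝ᵥ ps j = 0) ∧
    (∀ k ≤ K, ps k ⬝ᵥ rs k = rs k ⬝ᵥ rs k) := by
  have hsymA : Aᵀ = A := by
    have := hA.1
    ext i j
    exact congrFun (congrFun this i) j
  have hsym : ∀ u v : Fin n → ℝ, u ⬝ᵥ (A *ᵥ v) = v ⬝ᵥ (A *ᵥ u) := by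
    intro u v
    rw [dotProduct_mulVec, ← mulVec_transpose, hsymA, dotProduct_comm]
  have hpA : ∀ j ≤ K, ps j ⬝ᵥ (A *ᵥ ps j) ≠ 0 := by
    intro j hj
    have := hA.dotProduct_mulVec_pos (hbd j hj).2
    simp only [star_trivial] at this
    exact ne_of_gt this
  have hrr : ∀ j ≤ K, rs j ⬝ᵥ rs j ≠ 0 := by
    intro j hj
    rw [Ne, dotProduct_self_eq_zero]
    exact (hbd j hj).1
  -- aligned: rs k ⬝ ps k = rs k ⬝ rs k, given orthogonality up to k
  have halign : ∀ k : ℕ, (∀ j < k, rs k ⬝ᵥ ps j = 0) →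
      rs k ⬝ᵥ ps k = rs k ⬝ᵥ rs k := by
    intro k h
    cases k with
    | zero => rw [hp0]
    | succ m =>
      rw [hps m, dotProduct_add, dotProduct_smul,
        h m (Nat.lt_succ_self m), smul_zero, add_zero]
  have main : ∀ k ≤ K,
      (∀ j < k, rs k ⬝ᵥ ps j = 0) ∧ (∀ j < k, rs k ⬝ᵥ rs j = 0) ∧
      (∀ j < k, ps k ⬝ᵥ (A *ᵥ ps j) = 0) := by
    intro k
    induction k with
    | zero => intro _; exact ⟨fun j hj => absurd hj (Nat.not_lt_zero j),
        fun j hj => absurd hj (Nat.not_lt_zero j),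
        fun j hj => absurd hj (Nat.not_lt_zero j)⟩
    | succ k ih =>
      intro hk1
      have hk : k ≤ K := Nat.le_of_succ_le hk1
      obtain ⟨ih1, ih2, ih3⟩ := ih hk
      have hpApk := hpA k hk
      have hrrk := hrr k hk
      have h1 : ∀ j < k + 1, rs (k + 1) ⬝ᵥ ps j = 0 := by
        intro j hj
        rw [hrs k, sub_dotProduct, smul_dotProduct]
        rcases Nat.lt_succ_iff_lt_or_eq.mp hj with hj' | rfl
        · have hApp : (A *ᵥ ps k) ⬝ᵥ ps j = 0 := by
            rw [dotProduct_comm, hsym]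
            exact ih3 j hj'
          rw [ih1 j hj', hApp, smul_zero, sub_zero]
        · have hApp : (A *ᵥ ps j) ⬝ᵥ ps j = ps j ⬝ᵥ (A *ᵥ ps j) :=
            dotProduct_comm _ _
          rw [halign j ih1, hApp, smul_eq_mul]
          field_simp
          ring
      have h2 : ∀ j < k + 1, rs (k + 1) ⬝ᵥ rs j = 0 := by
        intro j hj
        cases j with
        | zero => rw [← hp0]; exact h1 0 hj
        | succ m =>
          have hrm : rs (m + 1) = ps (m + 1) -
              ((rs (m + 1) ⬝ᵥ rs (m + 1)) / (rs m ⬝ᵥ rs m)) • ps m := by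
            rw [hps m, add_sub_cancel_right]
          rw [hrm, dotProduct_sub, dotProduct_smul, h1 (m + 1) hj,
            h1 m (Nat.lt_of_succ_lt hj), smul_zero, sub_zero]
      have h3 : ∀ j < k + 1, ps (k + 1) ⬝ᵥ (A *ᵥ ps j) = 0 := by
        intro j hj
        have hApj : ((rs j ⬝ᵥ rs j) / (ps j ⬝ᵥ (A *ᵥ ps j))) • (A *ᵥ ps j)
            = rs j - rs (j + 1) := by
          rw [hrs j]; abel
        have hjK : j ≤ K := le_trans (Nat.le_of_lt_succ hj) hk
        have hγ : (rs j ⬝ᵥ rs j) / (ps j ⬝ᵥ (A *ᵥ ps j)) ≠ 0 :=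
          div_ne_zero (hrr j hjK) (hpA j hjK)
        have key : (rs j ⬝ᵥ rs j) / (ps j ⬝ᵥ (A *ᵥ ps j)) *
            (rs (k + 1) ⬝ᵥ (A *ᵥ ps j))
            = rs (k + 1) ⬝ᵥ rs j - rs (k + 1) ⬝ᵥ rs (j + 1) := by
          rw [← dotProduct_sub, ← hApj, dotProduct_smul, smul_eq_mul]
        rw [hps k, add_dotProduct, smul_dotProduct, smul_eq_mul]
        rcases Nat.lt_succ_iff_lt_or_eq.mp hj with hj' | rfl
        · have e1 : rs (k + 1) ⬝ᵥ (A *ᵥ ps j) = 0 := by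
            have := key
            rw [h2 j hj, h2 (j + 1) (Nat.succ_lt_succ hj'), sub_zero] at this
            exact (mul_eq_zero.mp this).resolve_left hγ
          rw [e1, ih3 j hj', mul_zero, add_zero]
        · rw [h2 j hj, zero_sub] at key
          field_simp at key ⊢
          linear_combination key
      exact ⟨h1, h2, h3⟩
  refine ⟨fun j k hjk hk => (main k hk).1 j hjk, fun k hk => ?_⟩
  rw [dotProduct_comm]
  exact halign k (main k hk).1
end

section
/- In the conjugate gradient algorithm applied to A x = b with symmetric positive definite A, the A-norm of the error decreases at each step with explicit decrement: for every k with 1 ≤ k ≤ K, ‖x − x_k‖_A² = ‖x − x_{k−1}‖_A² − γ_{k−1} (r_{k−1}ᵀ r_{k−1}); in particular ‖x − x_k‖_A < ‖x − x_{k−1}‖_A. -/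
open Matrix

/-- In CG, the A-norm of the error decreases at each step with explicit decrement. -/
theorem cg_error_monotone_decrease
    (n : ℕ) (A : Matrix (Fin n) (Fin n) ℝ) (hA : A.PosDef)
    (b x : Fin n → ℝ) (hx : A *ᵥ x = b)
    (xs rs ps : ℕ → Fin n → ℝ) (K : ℕ)
    (hr0 : rs 0 = b - A *ᵥ xs 0) (hp0 : ps 0 = rs 0)
    (hxs : ∀ k : ℕ, xs (k + 1) =
      xs k + ((rs k ⬝ᵥ rs k) / (ps k ⬝ᵥ (A *ᵥ ps k))) • ps k)
    (hrs : ∀ k : ℕ, rs (k + 1) =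
      rs k - ((rs k ⬝ᵥ rs k) / (ps k ⬝ᵥ (A *ᵥ ps k))) • (A *ᵥ ps k))
    (hps : ∀ k : ℕ, ps (k + 1) =
      rs (k + 1) + ((rs (k + 1) ⬝ᵥ rs (k + 1)) / (rs k ⬝ᵥ rs k)) • ps k)
    (hbd : ∀ j ≤ K, rs j ≠ 0 ∧ ps j ≠ 0) :
    ∀ k : ℕ, k + 1 ≤ K →
      ((x - xs (k + 1)) ⬝ᵥ (A *ᵥ (x - xs (k + 1))) =
        (x - xs k) ⬝ᵥ (A *ᵥ (x - xs k)) -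
          ((rs k ⬝ᵥ rs k) / (ps k ⬝ᵥ (A *ᵥ ps k))) * (rs k ⬝ᵥ rs k)) ∧
      Real.sqrt ((x - xs (k + 1)) ⬝ᵥ (A *ᵥ (x - xs (k + 1)))) <
        Real.sqrt ((x - xs k) ⬝ᵥ (A *ᵥ (x - xs k))) := by
  -- positivity facts
  have hpos : ∀ v : Fin n → ℝ, v ≠ 0 → 0 < v ⬝ᵥ (A *ᵥ v) := by
    intro v hv
    have := hA.dotProduct_mulVec_pos hv
    simpa using this
  have hnn : ∀ v : Fin n → ℝ, 0 ≤ v ⬝ᵥ (A *ᵥ v) := by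
    intro v
    by_cases hv : v = 0
    · simp [hv]
    · exact (hpos v hv).le
  -- symmetry of the bilinear form
  have hsym : ∀ u v : Fin n → ℝ, u ⬝ᵥ (A *ᵥ v) = v ⬝ᵥ (A *ᵥ u) := by
    intro u v
    have hAT : Aᵀ = A := by
      have := hA.isHermitian.eq
      simpa using this
    rw [dotProduct_mulVec, ← mulVec_transpose, hAT, dotProduct_comm]
  -- residual formula
  have hres : ∀ k : ℕ, rs k = b - A *ᵥ xs k := by
    intro k
    induction k with
    | zero => exact hr0
    | succ k ih =>
      rw [hrs k, hxs k, ih, mulVec_add, mulVec_smul]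
      abel
  have herr : ∀ k : ℕ, A *ᵥ (x - xs k) = rs k := by
    intro k
    rw [mulVec_sub, hx, ← hres]
  -- r_k ⬝ p_k = r_k ⬝ r_k for k ≤ K
  have horth : ∀ k ≤ K, rs k ⬝ᵥ ps k = rs k ⬝ᵥ rs k := by
    intro k hk
    induction k with
    | zero => rw [hp0]
    | succ k ih =>
      have hkK : k ≤ K := Nat.le_of_succ_le hk
      have ihk := ih hkK
      have hpk : ps k ≠ 0 := (hbd k hkK).2
      have hpApos := hpos (ps k) hpk
      have hstep : rs (k + 1) ⬝ᵥ ps k = 0 := by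
        rw [hrs k, sub_dotProduct, smul_dotProduct, ihk,
          dotProduct_comm (A *ᵥ ps k) (ps k), smul_eq_mul]
        field_simp
        ring
      rw [hps k, dotProduct_add, dotProduct_smul, hstep, smul_zero, add_zero]
  intro k hk
  have hkK : k ≤ K := Nat.le_of_succ_le hk
  have hpk : ps k ≠ 0 := (hbd k hkK).2
  have hrk : rs k ≠ 0 := (hbd k hkK).1
  have hpApos := hpos (ps k) hpk
  have hrrpos : 0 < rs k ⬝ᵥ rs k := by
    refine lt_of_le_of_ne ?_ ?_
    · have : (0:ℝ) ≤ ∑ i, rs k i * rs k i :=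
        Finset.sum_nonneg fun i _ => mul_self_nonneg _
      simpa [dotProduct] using this
    · exact fun h => hrk (dotProduct_self_eq_zero.mp h.symm)
  set γ := (rs k ⬝ᵥ rs k) / (ps k ⬝ᵥ (A *ᵥ ps k)) with hγ
  have key : (x - xs (k + 1)) ⬝ᵥ (A *ᵥ (x - xs (k + 1))) =
      (x - xs k) ⬝ᵥ (A *ᵥ (x - xs k)) - γ * (rs k ⬝ᵥ rs k) := by
    have hdiff : x - xs (k + 1) = (x - xs k) - γ • ps k := by
      rw [hxs k]; abel
    have h1 : ps k ⬝ᵥ (A *ᵥ (x - xs k)) = rs k ⬝ᵥ rs k := by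
      rw [herr k, dotProduct_comm, horth k hkK]
    have h2 : (x - xs k) ⬝ᵥ (A *ᵥ ps k) = rs k ⬝ᵥ rs k := by
      rw [hsym]; exact h1
    rw [hdiff]
    generalize x - xs k = e at h1 h2 ⊢
    simp only [mulVec_sub, mulVec_smul, dotProduct_sub, sub_dotProduct,
      dotProduct_smul, smul_dotProduct, smul_eq_mul, h1, h2]
    rw [hγ]
    field_simp
    ring
  refine ⟨key, ?_⟩
  apply Real.sqrt_lt_sqrt (hnn _)
  rw [key]
  have hγpos : 0 < γ := div_pos hrrpos hpApos
  nlinarith [mul_pos hγpos hrrpos]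
end

section
/- In the conjugate gradient algorithm applied to A x = b with symmetric positive definite A, the iterate x_k minimizes the A-norm error over the affine space spanned by the previous search directions: for every k ≤ K and every z ∈ x₀ + span{p₀, …, p_{k−1}}, one has ‖x − x_k‖_A ≤ ‖x − z‖_A. -/
open Matrix

/-- In CG, the iterate x_k minimizes the A-norm error over the affine space
x₀ + span{p₀, …, p_{k-1}}. -/
theorem cg_iterate_minimizes_A_norm
    (n : ℕ) (A : Matrix (Fin n) (Fin n) ℝ) (hA : A.PosDef)
    (b x : Fin n → ℝ) (hx : A *ᵥ x = b)
    (xs rs ps : ℕ → Fin n → ℝ) (K : ℕ)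
    (hr0 : rs 0 = b - A *ᵥ xs 0) (hp0 : ps 0 = rs 0)
    (hxs : ∀ k : ℕ, xs (k + 1) =
      xs k + ((rs k ⬝ᵥ rs k) / (ps k ⬝ᵥ (A *ᵥ ps k))) • ps k)
    (hrs : ∀ k : ℕ, rs (k + 1) =
      rs k - ((rs k ⬝ᵥ rs k) / (ps k ⬝ᵥ (A *ᵥ ps k))) • (A *ᵥ ps k))
    (hps : ∀ k : ℕ, ps (k + 1) =
      rs (k + 1) + ((rs (k + 1) ⬝ᵥ rs (k + 1)) / (rs k ⬝ᵥ rs k)) • ps k)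
    (hbd : ∀ j ≤ K, rs j ≠ 0 ∧ ps j ≠ 0) :
    ∀ k ≤ K, ∀ z : Fin n → ℝ,
      z - xs 0 ∈ Submodule.span ℝ (Set.range fun i : Fin k => ps i.val) →
      Real.sqrt ((x - xs k) ⬝ᵥ (A *ᵥ (x - xs k))) ≤
        Real.sqrt ((x - z) ⬝ᵥ (A *ᵥ (x - z))) := by
  have hT : Aᵀ = A := by have h : A.IsSymm := by simpa using hA.isHermitian
                         exact h
  have hsym : ∀ u v : Fin n → ℝ, u ⬝ᵥ (A *ᵥ v) = (A *ᵥ u) ⬝ᵥ v := by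
    intro u v; rw [dotProduct_mulVec, ← mulVec_transpose, hT]
  have hpos : ∀ v : Fin n → ℝ, v ≠ 0 → 0 < v ⬝ᵥ (A *ᵥ v) := by
    intro v hv; simpa using hA.dotProduct_mulVec_pos hv
  have hpos0 : ∀ v : Fin n → ℝ, 0 ≤ v ⬝ᵥ (A *ᵥ v) := by
    intro v
    by_cases hv : v = 0
    · simp [hv]
    · exact le_of_lt (hpos v hv)
  set γ : ℕ → ℝ := fun k => (rs k ⬝ᵥ rs k) / (ps k ⬝ᵥ (A *ᵥ ps k)) with hγ
  have hpAp : ∀ j ≤ K, 0 < ps j ⬝ᵥ (A *ᵥ ps j) := fun j hj => hpos _ (hbd j hj).2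
  have hrrpos : ∀ j ≤ K, 0 < rs j ⬝ᵥ rs j := by
    intro j hj
    have hne : rs j ⬝ᵥ rs j ≠ 0 := by
      intro h
      exact (hbd j hj).1 (dotProduct_self_eq_zero.mp h)
    have hnn : 0 ≤ rs j ⬝ᵥ rs j := by
      simpa [dotProduct] using Finset.sum_nonneg fun i _ => mul_self_nonneg (rs j i)
    exact lt_of_le_of_ne hnn (Ne.symm hne)
  have hγpos : ∀ j ≤ K, 0 < γ j := fun j hj => div_pos (hrrpos j hj) (hpAp j hj)
  -- residual identity
  have hres : ∀ k, rs k = b - A *ᵥ xs k := by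
    intro k
    induction k with
    | zero => exact hr0
    | succ k ih =>
      rw [hrs k, hxs k, ih, mulVec_add, mulVec_smul]
      module
  -- main orthogonality induction
  have key : ∀ k ≤ K,
      (∀ j < k, rs k ⬝ᵥ ps j = 0) ∧ (∀ j < k, rs k ⬝ᵥ rs j = 0) ∧
      (∀ j < k, ps k ⬝ᵥ (A *ᵥ ps j) = 0) := by
    intro k
    induction k with
    | zero =>
      intro _
      exact ⟨fun j hj => absurd hj (Nat.not_lt_zero j),
             fun j hj => absurd hj (Nat.not_lt_zero j),
             fun j hj => absurd hj (Nat.not_lt_zero j)⟩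
    | succ k ih =>
      intro hk
      have hkK : k ≤ K := le_of_lt (Nat.lt_of_succ_le hk)
      obtain ⟨ha, hb, hc⟩ := ih hkK
      -- r_k ⬝ p_k = r_k ⬝ r_k
      have hrp : rs k ⬝ᵥ ps k = rs k ⬝ᵥ rs k := by
        cases k with
        | zero => rw [hp0]
        | succ m =>
          rw [hps m, dotProduct_add, dotProduct_smul,
            ha m (Nat.lt_succ_self m), smul_eq_mul, mul_zero, add_zero]
      have hApApj : ∀ j < k, (A *ᵥ ps k) ⬝ᵥ ps j = 0 := by
        intro j hj
        rw [← hsym (ps k) (ps j)]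
        exact hc j hj
      -- (a)
      have ha' : ∀ j < k + 1, rs (k + 1) ⬝ᵥ ps j = 0 := by
        intro j hj
        rw [hrs k, sub_dotProduct, smul_dotProduct, smul_eq_mul]
        rcases Nat.lt_succ_iff_lt_or_eq.mp hj with h | h
        · rw [ha j h, hApApj j h, mul_zero, sub_zero]
        · subst h
          rw [hrp, ← hsym (ps j) (ps j)]
          have hne : ps j ⬝ᵥ (A *ᵥ ps j) ≠ 0 := ne_of_gt (hpAp j hkK)
          field_simp [hγ]
          ring
      -- (A p_k) ⬝ r_j = 0 for j < k
      have hAprj : ∀ j < k, (A *ᵥ ps k) ⬝ᵥ rs j = 0 := by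
        intro j hj
        cases j with
        | zero => rw [← hp0]; exact hApApj 0 hj
        | succ m =>
          have hrj : rs (m + 1) = ps (m + 1) -
              ((rs (m + 1) ⬝ᵥ rs (m + 1)) / (rs m ⬝ᵥ rs m)) • ps m := by
            rw [hps m]; module
          rw [hrj, dotProduct_sub, dotProduct_smul, smul_eq_mul,
            hApApj (m + 1) hj, hApApj m (lt_trans (Nat.lt_succ_self m) hj),
            mul_zero, sub_zero]
      -- (A p_k) ⬝ r_k = p_k ⬝ A p_k
      have hAprk : (A *ᵥ ps k) ⬝ᵥ rs k = ps k ⬝ᵥ (A *ᵥ ps k) := by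
        cases k with
        | zero => rw [← hp0, ← hsym]
        | succ m =>
          have hrj : rs (m + 1) = ps (m + 1) -
              ((rs (m + 1) ⬝ᵥ rs (m + 1)) / (rs m ⬝ᵥ rs m)) • ps m := by
            rw [hps m]; module
          rw [hrj, dotProduct_sub, dotProduct_smul, smul_eq_mul,
            hApApj m (Nat.lt_succ_self m), mul_zero, sub_zero, ← hsym]
      -- (b)
      have hb' : ∀ j < k + 1, rs (k + 1) ⬝ᵥ rs j = 0 := by
        intro j hj
        rw [hrs k, sub_dotProduct, smul_dotProduct, smul_eq_mul]
        rcases Nat.lt_succ_iff_lt_or_eq.mp hj with h | h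
        · rw [hb j h, hAprj j h, mul_zero, sub_zero]
        · subst h
          rw [hAprk]
          have hne : ps j ⬝ᵥ (A *ᵥ ps j) ≠ 0 := ne_of_gt (hpAp j hkK)
          field_simp [hγ]
          ring
      -- A p_j in terms of residuals
      have hApj : ∀ j ≤ K, A *ᵥ ps j = (γ j)⁻¹ • (rs j - rs (j + 1)) := by
        intro j hj
        have hγne : γ j ≠ 0 := ne_of_gt (hγpos j hj)
        simp only [hγ] at hγne ⊢
        rw [hrs j, sub_sub_cancel, smul_smul, inv_mul_cancel₀ hγne, one_smul]
      -- (c)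
      have hc' : ∀ j < k + 1, ps (k + 1) ⬝ᵥ (A *ᵥ ps j) = 0 := by
        intro j hj
        rw [hps k, add_dotProduct, smul_dotProduct, smul_eq_mul]
        rcases Nat.lt_succ_iff_lt_or_eq.mp hj with h | h
        · rw [hc j h, mul_zero, add_zero, hApj j (le_trans (le_of_lt h) hkK),
            dotProduct_smul, dotProduct_sub,
            hb' j (lt_trans h (Nat.lt_succ_self k)),
            hb' (j + 1) (Nat.succ_lt_succ h), sub_zero, smul_eq_mul, mul_zero]
        · subst h
          have h1 : rs j ⬝ᵥ rs j ≠ 0 := ne_of_gt (hrrpos j hkK)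
          have h2 : ps j ⬝ᵥ (A *ᵥ ps j) ≠ 0 := ne_of_gt (hpAp j hkK)
          have h3 : ps j ⬝ᵥ rs j = rs j ⬝ᵥ rs j := by
            rw [dotProduct_comm]; exact hrp
          have h4 : ps j ⬝ᵥ rs (j + 1) = 0 := by
            rw [dotProduct_comm]; exact ha' j (Nat.lt_succ_self j)
          rw [hApj j hkK]
          simp only [dotProduct_smul, dotProduct_sub, smul_eq_mul, hγ]
          rw [h3, h4, hb' j (Nat.lt_succ_self j)]
          field_simp
          ring
      exact ⟨ha', hb', hc'⟩
  -- span of iterates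
  have hspan : ∀ k, xs k - xs 0 ∈
      Submodule.span ℝ (Set.range fun i : Fin k => ps i.val) := by
    intro k
    induction k with
    | zero => simp
    | succ k ih =>
      have hsub : (Set.range fun i : Fin k => ps i.val) ⊆
          (Set.range fun i : Fin (k + 1) => ps i.val) := by
        rintro _ ⟨i, rfl⟩
        exact ⟨i.castSucc, rfl⟩
      have h1 : xs k - xs 0 ∈
          Submodule.span ℝ (Set.range fun i : Fin (k + 1) => ps i.val) :=
        Submodule.span_mono hsub ih
      have h2 : ps k ∈
          Submodule.span ℝ (Set.range fun i : Fin (k + 1) => ps i.val) :=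
        Submodule.subset_span ⟨⟨k, Nat.lt_succ_self k⟩, rfl⟩
      have : xs (k + 1) - xs 0 = (xs k - xs 0) + γ k • ps k := by
        rw [hxs k]; module
      rw [this]
      exact Submodule.add_mem _ h1 (Submodule.smul_mem _ _ h2)
  -- final assembly
  intro k hk z hz
  obtain ⟨ha, -, -⟩ := key k hk
  have horth : ∀ w ∈ Submodule.span ℝ (Set.range fun i : Fin k => ps i.val),
      rs k ⬝ᵥ w = 0 := by
    intro w hw
    induction hw using Submodule.span_induction with
    | mem w hw => obtain ⟨i, rfl⟩ := hw; exact ha i.val i.isLt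
    | zero => simp
    | add u v _ _ hu hv => rw [dotProduct_add, hu, hv, add_zero]
    | smul c u _ hu => rw [dotProduct_smul, hu, smul_eq_mul, mul_zero]
  have hwmem : xs k - z ∈ Submodule.span ℝ (Set.range fun i : Fin k => ps i.val) := by
    have h := Submodule.sub_mem _ (hspan k) hz
    have he : (xs k - xs 0) - (z - xs 0) = xs k - z := by abel
    rwa [he] at h
  have hAe : A *ᵥ (x - xs k) = rs k := by
    rw [mulVec_sub, hx, ← hres k]
  have h1 : (x - xs k) ⬝ᵥ (A *ᵥ (xs k - z)) = 0 := by
    rw [hsym, hAe]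
    exact horth _ hwmem
  have h2 : (xs k - z) ⬝ᵥ (A *ᵥ (x - xs k)) = 0 := by
    rw [hAe, dotProduct_comm]
    exact horth _ hwmem
  have hdecomp : (x - z) ⬝ᵥ (A *ᵥ (x - z)) =
      (x - xs k) ⬝ᵥ (A *ᵥ (x - xs k)) + (xs k - z) ⬝ᵥ (A *ᵥ (xs k - z)) := by
    have hxz : x - z = (x - xs k) + (xs k - z) := by abel
    rw [hxz, mulVec_add, dotProduct_add, add_dotProduct, add_dotProduct, h1, h2]
    ring
  apply Real.sqrt_le_sqrt
  rw [hdecomp]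
  linarith [hpos0 (xs k - z)]
end
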